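/- If ℓ' ≤ ℓ and n ∈ ℕ, then the Turán graph T_{ℓ·⌈n/ℓ'⌉, ℓ} contains a non-induced copy of the Turán graph T_{n,ℓ'}. -/

import Mathlib

/-- A graph `H` contains a non-induced copy of `G`: an injection mapping edges to edges. -/
def HasCopy {α β : Type*} (G : SimpleGraph α) (H : SimpleGraph β) : Prop :=
  ∃ f : α ↪ β, ∀ a b, G.Adj a b → H.Adj (f a) (f b)

/-- If `ℓ' ≤ ℓ`, then the Turán graph `T_{ℓ·⌈n/ℓ'⌉, ℓ}` contains a non-induced copy of the
Turán graph `T_{n,ℓ'}`. -/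
theorem stmt1 (ℓ' ℓ n : ℕ) (hpos : 0 < ℓ') (hle : ℓ' ≤ ℓ) :
    HasCopy (SimpleGraph.turanGraph n ℓ')
      (SimpleGraph.turanGraph (ℓ * ((n + ℓ' - 1) / ℓ')) ℓ) := by
  have hℓ : 0 < ℓ := lt_of_lt_of_le hpos hle
  have hbound : ∀ i : Fin n, (i : ℕ) % ℓ' + ℓ * ((i : ℕ) / ℓ') < ℓ * ((n + ℓ' - 1) / ℓ') := by
    intro i
    have h1 : (i : ℕ) / ℓ' + 1 ≤ (n + ℓ' - 1) / ℓ' := by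
      have hi : (i : ℕ) + ℓ' ≤ n + ℓ' - 1 := by omega
      calc (i : ℕ) / ℓ' + 1 = ((i : ℕ) + ℓ') / ℓ' := by
            rw [Nat.add_div_right _ hpos]
        _ ≤ (n + ℓ' - 1) / ℓ' := Nat.div_le_div_right hi
    calc (i : ℕ) % ℓ' + ℓ * ((i : ℕ) / ℓ')
        < ℓ + ℓ * ((i : ℕ) / ℓ') := by
          have := Nat.mod_lt (i : ℕ) hpos; omega
      _ = ℓ * ((i : ℕ) / ℓ' + 1) := by ring
      _ ≤ ℓ * ((n + ℓ' - 1) / ℓ') := Nat.mul_le_mul_left _ h1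
  have hmod : ∀ i : Fin n,
      (((i : ℕ) % ℓ' + ℓ * ((i : ℕ) / ℓ')) % ℓ) = (i : ℕ) % ℓ' := by
    intro i
    rw [Nat.add_mul_mod_self_left]
    exact Nat.mod_eq_of_lt (lt_of_lt_of_le (Nat.mod_lt _ hpos) hle)
  refine ⟨⟨fun i => ⟨(i : ℕ) % ℓ' + ℓ * ((i : ℕ) / ℓ'), hbound i⟩, ?_⟩, ?_⟩
  · intro i j h
    simp only [Fin.mk.injEq] at h
    have h2 : ((i : ℕ) % ℓ' + ℓ * ((i : ℕ) / ℓ')) / ℓ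
        = ((j : ℕ) % ℓ' + ℓ * ((j : ℕ) / ℓ')) / ℓ := by rw [h]
    have h3 := hmod i
    have h4 := hmod j
    rw [h] at h3
    have hd : ∀ k : Fin n, ((k : ℕ) % ℓ' + ℓ * ((k : ℕ) / ℓ')) / ℓ = (k : ℕ) / ℓ' := by
      intro k
      rw [Nat.add_mul_div_left _ _ hℓ,
        Nat.div_eq_of_lt (lt_of_lt_of_le (Nat.mod_lt _ hpos) hle), Nat.zero_add]
    rw [hd i, hd j] at h2
    have heq : (i : ℕ) % ℓ' = (j : ℕ) % ℓ' := h3.symm.trans h4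
    have : (i : ℕ) = (j : ℕ) := by
      have hi := Nat.div_add_mod (i : ℕ) ℓ'
      rw [h2, heq] at hi
      exact hi.symm.trans (Nat.div_add_mod _ _)
    exact Fin.ext this
  · intro a b hab
    simp only [SimpleGraph.turanGraph, Function.Embedding.coeFn_mk] at hab ⊢
    exact fun h => hab ((hmod a).symm.trans (h.trans (hmod b)))
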